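/- Let S be the greedy t-spanner of a finite point set. For any two distinct edges MN and PQ of S, the matching endpoint distances satisfy max(|MP|, |NQ|) ≥ ((t-1)/(2t)) · min(|MN|, |PQ|), where |XY| denotes the metric distance between X and Y. -/

import Mathlib

open Classical

noncomputable section

noncomputable section

/-- The length of a path given as a list of points: the sum of the metric
distances of consecutive points. -/
def chainLength {X : Type*} [PseudoMetricSpace X] : List X → ℝ
  | [] => 0
  | [_] => 0
  | a :: b :: rest => dist a b + chainLength (b :: rest)

/-- `p` is a path from `u` to `v` using only (undirected) edges from `E`. -/
def IsPathIn {X : Type*} (E : Set (X × X)) (p : List X) (u v : X) : Prop :=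
  p ≠ [] ∧ p.head? = some u ∧ p.getLast? = some v ∧
    p.Chain' (fun a b => (a, b) ∈ E ∨ (b, a) ∈ E)

/-- One step of the naive greedy spanner algorithm: add the pair `e` as an edge
unless a path of length at most `t · dist e.1 e.2` already exists. -/
def greedyStep {X : Type*} [PseudoMetricSpace X] (t : ℝ)
    (S : Finset (X × X)) (e : X × X) : Finset (X × X) :=
  if ∃ p : List X, IsPathIn (↑S) p e.1 e.2 ∧ chainLength p ≤ t * dist e.1 e.2
  then S else insert e S

/-- The naive greedy spanner algorithm run over a list of pairs. -/
def naiveGreedy {X : Type*} [PseudoMetricSpace X] (t : ℝ) (l : List (X × X)) :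
    Finset (X × X) :=
  l.foldl (greedyStep t) ∅

section Helpers

set_option linter.unusedSectionVars false

variable {X : Type*} [PseudoMetricSpace X]

lemma chainLength_append (p : List X) (a : X) (rest : List X)
    (h : p.getLast? = some a) :
    chainLength (p ++ rest) = chainLength p + chainLength (a :: rest) := by
  induction p with
  | nil => simp at h
  | cons x p ih =>
    cases p with
    | nil =>
      simp only [List.getLast?_singleton, Option.some.injEq] at h
      subst h
      cases rest <;> simp [chainLength]
    | cons y p' =>
      have h' : (y :: p').getLast? = some a := by
        rw [List.getLast?_cons_cons] at h; exact h
      have := ih h'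
      simp only [List.cons_append, chainLength] at this ⊢
      rw [this]
      ring

lemma chainLength_nonneg (p : List X) : 0 ≤ chainLength p := by
  induction p with
  | nil => simp [chainLength]
  | cons a p ih =>
    cases p with
    | nil => simp [chainLength]
    | cons b rest => simp only [chainLength]; positivity

lemma chainLength_reverse (p : List X) : chainLength p.reverse = chainLength p := by
  induction p with
  | nil => rfl
  | cons a p ih =>
    cases p with
    | nil => rfl
    | cons b p' =>
      have hlast : (b :: p').reverse.getLast? = some b := by
        rw [List.getLast?_reverse]; rfl
      rw [List.reverse_cons, chainLength_append _ b [a] hlast, ih]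
      simp only [chainLength]
      rw [dist_comm]
      ring

lemma IsPathIn.mono {E E' : Set (X × X)} (h : E ⊆ E') {p : List X} {u v : X}
    (hp : IsPathIn E p u v) : IsPathIn E' p u v := by
  obtain ⟨h1, h2, h3, h4⟩ := hp
  exact ⟨h1, h2, h3, h4.imp fun a b hab => hab.imp (fun x => h x) (fun x => h x)⟩

lemma IsPathIn.reverse {E : Set (X × X)} {p : List X} {u v : X}
    (hp : IsPathIn E p u v) : IsPathIn E p.reverse v u := by
  obtain ⟨h1, h2, h3, h4⟩ := hp
  refine ⟨by simpa using h1, by rwa [List.head?_reverse], by rwa [List.getLast?_reverse], ?_⟩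
  show List.IsChain _ _
  rw [List.isChain_reverse]
  exact h4.imp fun a b hab => hab.symm

lemma path_trans {E : Set (X × X)} {p1 p2 : List X} {u v w : X}
    (h1 : IsPathIn E p1 u v) (h2 : IsPathIn E p2 v w) :
    ∃ p, IsPathIn E p u w ∧ chainLength p = chainLength p1 + chainLength p2 := by
  obtain ⟨n1, hd1, lt1, ch1⟩ := h1
  obtain ⟨n2, hd2, lt2, ch2⟩ := h2
  obtain ⟨rest, rfl⟩ : ∃ rest, p2 = v :: rest := by
    cases p2 with
    | nil => simp at n2
    | cons a r => simp only [List.head?_cons, Option.some.injEq] at hd2; exact ⟨r, by rw [hd2]⟩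
  cases rest with
  | nil =>
    refine ⟨p1, ⟨n1, hd1, ?_, ch1⟩, by simp [chainLength]⟩
    simp only [List.getLast?_singleton, Option.some.injEq] at lt2
    rw [lt1, lt2]
  | cons b rest' =>
    refine ⟨p1 ++ b :: rest', ⟨by simp [n1], ?_, ?_, ?_⟩,
      chainLength_append p1 v (b :: rest') lt1⟩
    · rw [List.head?_append, hd1]; rfl
    · rw [List.getLast?_append_of_ne_nil p1 (by simp)]
      rw [List.getLast?_cons_cons] at lt2
      exact lt2
    · show List.IsChain _ _
      rw [List.isChain_append]
      refine ⟨ch1, (List.isChain_cons.mp ch2).2, ?_⟩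
      intro x hx y hy
      rw [lt1] at hx
      simp only [Option.mem_def, Option.some.injEq, List.head?_cons] at hx hy
      subst hx; subst hy
      exact (List.isChain_cons_cons.mp ch2).1

lemma trivial_path (E : Set (X × X)) (u : X) : IsPathIn E [u] u u :=
  ⟨by simp, rfl, rfl, List.isChain_singleton _⟩

lemma edge_path {E : Set (X × X)} {u v : X} (h : (u, v) ∈ E) :
    IsPathIn E [u, v] u v :=
  ⟨by simp, rfl, rfl, List.isChain_cons_cons.mpr ⟨Or.inl h, List.isChain_singleton _⟩⟩

lemma subset_greedyStep (t : ℝ) (S : Finset (X × X)) (e : X × X) :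
    S ⊆ greedyStep t S e := by
  unfold greedyStep
  split
  · exact Finset.Subset.refl S
  · exact Finset.subset_insert e S

lemma subset_foldl (t : ℝ) (S : Finset (X × X)) (l : List (X × X)) :
    S ⊆ List.foldl (greedyStep t) S l := by
  induction l generalizing S with
  | nil => exact Finset.Subset.refl S
  | cons a l ih =>
    exact (subset_greedyStep t S a).trans (ih (greedyStep t S a))

lemma exists_path_of_mem {t : ℝ} (ht : 1 ≤ t) (S : Finset (X × X))
    {l : List (X × X)} {e : X × X} (he : e ∈ l) :
    ∃ p, IsPathIn (↑(List.foldl (greedyStep t) S l)) p e.1 e.2 ∧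
      chainLength p ≤ t * dist e.1 e.2 := by
  induction l generalizing S with
  | nil => simp at he
  | cons a l ih =>
    rcases List.mem_cons.mp he with rfl | he'
    · have key : ∃ p, IsPathIn (↑(greedyStep t S e)) p e.1 e.2 ∧
          chainLength p ≤ t * dist e.1 e.2 := by
        unfold greedyStep
        split
        · next h =>
          obtain ⟨p, hp, hlen⟩ := h
          exact ⟨p, hp, hlen⟩
        · refine ⟨[e.1, e.2], edge_path (by simp), ?_⟩
          simp only [chainLength]
          nlinarith [dist_nonneg (x := e.1) (y := e.2)]
      obtain ⟨p, hp, hlen⟩ := key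
      have hsub : (↑(greedyStep t S e) : Set (X × X)) ⊆
          ↑(List.foldl (greedyStep t) (greedyStep t S e) l) := by
        exact_mod_cast subset_foldl t _ l
      exact ⟨p, hp.mono hsub, hlen⟩
    · exact ih (greedyStep t S a) he'

lemma mem_foldl {t : ℝ} {S : Finset (X × X)} {l : List (X × X)} {e : X × X}
    (h : e ∈ List.foldl (greedyStep t) S l) :
    e ∈ S ∨ ∃ l1 l2, l = l1 ++ e :: l2 ∧
      ¬∃ p, IsPathIn (↑(List.foldl (greedyStep t) S l1)) p e.1 e.2 ∧
        chainLength p ≤ t * dist e.1 e.2 := by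
  induction l generalizing S with
  | nil => exact Or.inl h
  | cons a l ih =>
    rcases ih h with h' | ⟨l1, l2, rfl, hfail⟩
    · unfold greedyStep at h'
      split at h'
      · exact Or.inl h'
      · next hc =>
        rcases Finset.mem_insert.mp h' with rfl | h''
        · exact Or.inr ⟨[], l, rfl, hc⟩
        · exact Or.inl h''
    · exact Or.inr ⟨a :: l1, l2, rfl, hfail⟩

/-- Any pair in `l` with distance strictly smaller than that of the split
element lies in the prefix. -/
lemma mem_prefix_of_lt {l L1 L2 : List (X × X)} {e c : X × X}
    (hsort : List.Pairwise (fun a b => dist a.1 a.2 ≤ dist b.1 b.2) l)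
    (hsplit : l = L1 ++ e :: L2) (hc : c ∈ l)
    (hlt : dist c.1 c.2 < dist e.1 e.2) : c ∈ L1 := by
  subst hsplit
  rcases List.mem_append.mp hc with h | h
  · exact h
  · exfalso
    have hp : (L1 ++ e :: L2).Pairwise (fun a b => dist a.1 a.2 ≤ dist b.1 b.2) := hsort
    have h2 := (List.pairwise_append.mp hp).2.1
    rcases List.mem_cons.mp h with rfl | h'
    · exact lt_irrefl _ hlt
    · exact absurd ((List.pairwise_cons.mp h2).1 c h') (not_le.mpr hlt)

end Helpers

section Key

variable {X : Type*} [MetricSpace X]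

/-- A path from `u` to `v` of length at most `t · dist u v` exists in the
greedy spanner state whenever the pair `{u,v}` occurs in the prefix. -/
lemma exists_short_path {t : ℝ} (ht : 1 ≤ t) {L1 : List (X × X)} {u v : X}
    (h : (u, v) ∈ L1 ∨ (v, u) ∈ L1 ∨ u = v) :
    ∃ p, IsPathIn (↑(List.foldl (greedyStep t) ∅ L1)) p u v ∧
      chainLength p ≤ t * dist u v := by
  rcases h with h | h | rfl
  · simpa using exists_path_of_mem ht ∅ h
  · obtain ⟨p, hp, hlen⟩ := exists_path_of_mem ht ∅ h
    refine ⟨p.reverse, hp.reverse, ?_⟩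
    rw [chainLength_reverse]
    simpa [dist_comm] using hlen
  · refine ⟨[u], trivial_path _ u, ?_⟩
    have : chainLength ([u] : List X) = 0 := rfl
    rw [this]
    have : (0:ℝ) ≤ t * dist u u := by positivity
    exact this

lemma key_gap {t : ℝ} (ht : 1 < t) (V : Finset X) (l L1 L2 : List (X × X))
    (hmem : ∀ e ∈ l, e.1 ∈ V ∧ e.2 ∈ V ∧ e.1 ≠ e.2)
    (hsort : List.Pairwise (fun a b => dist a.1 a.2 ≤ dist b.1 b.2) l)
    (hcomp : ∀ P ∈ V, ∀ Q ∈ V, P ≠ Q → (P, Q) ∈ l ∨ (Q, P) ∈ l)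
    (M N P Q : X)
    (hsplit : l = L1 ++ (P, Q) :: L2)
    (hMNmem : (M, N) ∈ List.foldl (greedyStep t) ∅ L1)
    (hfail : ¬∃ p, IsPathIn (↑(List.foldl (greedyStep t) ∅ L1)) p P Q ∧
      chainLength p ≤ t * dist P Q)
    (hMNl : (M, N) ∈ l)
    (hMP : dist M P < dist P Q) (hNQ : dist N Q < dist P Q)
    (hMNle : dist M N ≤ dist P Q) :
    (t - 1) * dist P Q ≤ 2 * t * max (dist M P) (dist N Q) := by
  set S := List.foldl (greedyStep t) ∅ L1 with hS
  have hPQl : (P, Q) ∈ l := by rw [hsplit]; exact List.mem_append_right _ (List.mem_cons_self)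
  obtain ⟨hMV, hNV, _⟩ := hmem _ hMNl
  obtain ⟨hPV, hQV, _⟩ := hmem _ hPQl
  -- a short path from P to M
  have hpPM : ∃ p, IsPathIn (↑S) p P M ∧ chainLength p ≤ t * dist P M := by
    apply exists_short_path ht.le
    by_cases hPM : P = M
    · exact Or.inr (Or.inr hPM)
    · rcases hcomp P hPV M hMV hPM with h | h
      · exact Or.inl (mem_prefix_of_lt hsort hsplit h (by simpa [dist_comm] using hMP))
      · exact Or.inr (Or.inl (mem_prefix_of_lt hsort hsplit h (by simpa [dist_comm] using hMP)))
  have hpNQ : ∃ p, IsPathIn (↑S) p N Q ∧ chainLength p ≤ t * dist N Q := by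
    apply exists_short_path ht.le
    by_cases hNQ' : N = Q
    · exact Or.inr (Or.inr hNQ')
    · rcases hcomp N hNV Q hQV hNQ' with h | h
      · exact Or.inl (mem_prefix_of_lt hsort hsplit h hNQ)
      · exact Or.inr (Or.inl (mem_prefix_of_lt hsort hsplit h (by simpa [dist_comm] using hNQ)))
  obtain ⟨p1, hp1, hl1⟩ := hpPM
  obtain ⟨p2, hp2, hl2⟩ := hpNQ
  have hedge : IsPathIn (↑S) [M, N] M N := edge_path (by exact_mod_cast hMNmem)
  obtain ⟨q1, hq1, hq1len⟩ := path_trans hp1 hedge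
  obtain ⟨q2, hq2, hq2len⟩ := path_trans hq1 hp2
  have hlong : t * dist P Q < chainLength q2 := by
    by_contra hcon
    exact hfail ⟨q2, hq2, le_of_not_gt hcon⟩
  have hMNlen : chainLength ([M, N] : List X) = dist M N := by simp [chainLength]
  rw [hq2len, hq1len, hMNlen] at hlong
  have h1 : dist M P ≤ max (dist M P) (dist N Q) := le_max_left _ _
  have h2 : dist N Q ≤ max (dist M P) (dist N Q) := le_max_right _ _
  have ht0 : (0:ℝ) < t := lt_trans one_pos ht
  rw [dist_comm P M] at hl1
  nlinarith

end Key

/-- **Endpoint-gap property of the greedy spanner.** For any two distinct edges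
`MN` and `PQ` of the greedy `t`-spanner, the matching endpoint distances satisfy
`max(|MP|, |NQ|) ≥ ((t-1)/(2t)) · min(|MN|, |PQ|)`. -/
theorem greedy_endpoint_gap {X : Type*} [MetricSpace X] {t : ℝ} (ht : 1 < t)
    (V : Finset X) (l : List (X × X))
    (hmem : ∀ e ∈ l, e.1 ∈ V ∧ e.2 ∈ V ∧ e.1 ≠ e.2)
    (hsort : List.Pairwise (fun a b => dist a.1 a.2 ≤ dist b.1 b.2) l)
    (hcomp : ∀ P ∈ V, ∀ Q ∈ V, P ≠ Q → (P, Q) ∈ l ∨ (Q, P) ∈ l)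
    (M N P Q : X)
    (hMN : (M, N) ∈ naiveGreedy t l) (hPQ : (P, Q) ∈ naiveGreedy t l)
    (hne : (M, N) ≠ (P, Q) ∧ (M, N) ≠ (Q, P)) :
    (t - 1) / (2 * t) * min (dist M N) (dist P Q) ≤ max (dist M P) (dist N Q) := by
  have ht0 : (0:ℝ) < t := lt_trans one_pos ht
  have h2t : (0:ℝ) < 2 * t := by linarith
  have hcoef0 : (0:ℝ) ≤ (t - 1) / (2 * t) := div_nonneg (by linarith) (by linarith)
  have hcoef1 : (t - 1) / (2 * t) ≤ 1 := by
    rw [div_le_one h2t]; linarith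
  set dmin := min (dist M N) (dist P Q) with hdmin
  have hdmin0 : 0 ≤ dmin := le_min dist_nonneg dist_nonneg
  -- easy cases: one of the endpoint distances is already large
  by_cases hbig : dmin ≤ max (dist M P) (dist N Q)
  · calc (t - 1) / (2 * t) * dmin ≤ 1 * dmin := by
          exact mul_le_mul_of_nonneg_right hcoef1 hdmin0
      _ = dmin := one_mul _
      _ ≤ _ := hbig
  push_neg at hbig
  have hMPlt : dist M P < dmin := lt_of_le_of_lt (le_max_left _ _) hbig
  have hNQlt : dist N Q < dmin := lt_of_le_of_lt (le_max_right _ _) hbig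
  -- find insertion steps
  obtain hMN' := mem_foldl (t := t) (S := ∅) hMN
  obtain hPQ' := mem_foldl (t := t) (S := ∅) hPQ
  rcases hMN' with h | ⟨l1, l2, heq1, hfail1⟩
  · simp at h
  rcases hPQ' with h | ⟨L1, L2, heq2, hfail2⟩
  · simp at h
  have hMNl : (M, N) ∈ l := by
    rw [heq1]; exact List.mem_append_right _ (List.mem_cons_self)
  have hPQl : (P, Q) ∈ l := by
    rw [heq2]; exact List.mem_append_right _ (List.mem_cons_self)
  have hnelen : l1.length ≠ L1.length := by
    intro h
    have h1 : l.drop l1.length = (M, N) :: l2 := by rw [heq1]; exact List.drop_left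
    have h2 : l.drop L1.length = (P, Q) :: L2 := by rw [heq2]; exact List.drop_left
    rw [h, h2] at h1
    exact hne.1 (by injection h1 with h _; exact h.symm)
  -- the generic "one before the other" argument
  have main : ∀ (A B C D : X) (k1 k2 K1 K2 : List (X × X)),
      l = k1 ++ (A, B) :: k2 → l = K1 ++ (C, D) :: K2 →
      (¬∃ p, IsPathIn (↑(List.foldl (greedyStep t) ∅ k1)) p A B ∧
        chainLength p ≤ t * dist A B) →
      (¬∃ p, IsPathIn (↑(List.foldl (greedyStep t) ∅ K1)) p C D ∧
        chainLength p ≤ t * dist C D) →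
      k1.length < K1.length →
      dist A C < dist C D → dist B D < dist C D →
      (t - 1) * dist C D ≤ 2 * t * max (dist A C) (dist B D) := by
    intro A B C D k1 k2 K1 K2 e1 e2 f1 f2 hlen hAC hBD
    have htake1 : l.take (k1.length + 1) = k1 ++ [(A, B)] := by
      rw [e1, List.take_length_add_append 1]
      rfl
    have htakeK : l.take K1.length = K1 := by rw [e2]; exact List.take_left
    have hpre : K1 = (k1 ++ [(A, B)]) ++ K1.drop (k1.length + 1) := by
      have h3 : K1.take (k1.length + 1) = k1 ++ [(A, B)] := by
        rw [← htakeK, List.take_take, min_eq_left hlen, htake1]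
      rw [← h3]
      exact (List.take_append_drop _ _).symm
    have hABmem : (A, B) ∈ List.foldl (greedyStep t) ∅ K1 := by
      rw [hpre, List.foldl_append]
      apply subset_foldl
      rw [List.foldl_append]
      simp only [List.foldl_cons, List.foldl_nil]
      unfold greedyStep
      split
      · next h => exact absurd h f1
      · exact Finset.mem_insert_self _ _
    have hABK1 : (A, B) ∈ K1 := by
      rw [hpre]
      exact List.mem_append_left _ (List.mem_append_right _ (List.mem_singleton.mpr rfl))
    have hABle : dist A B ≤ dist C D := by
      have hp : l.Pairwise (fun a b => dist a.1 a.2 ≤ dist b.1 b.2) := hsort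
      rw [e2] at hp
      exact (List.pairwise_append.mp hp).2.2 _ hABK1 _ (List.mem_cons_self)
    exact key_gap ht V l K1 K2 hmem hsort hcomp A B C D e2 hABmem f2
      (by rw [e1]; exact List.mem_append_right _ (List.mem_cons_self))
      hAC hBD hABle
  rcases lt_or_gt_of_ne hnelen with hlt | hgt
  · -- MN inserted before PQ
    have := main M N P Q l1 l2 L1 L2 heq1 heq2 hfail1 hfail2 hlt
      (lt_of_lt_of_le hMPlt (min_le_right _ _))
      (lt_of_lt_of_le hNQlt (min_le_right _ _))
    have hle : dmin ≤ dist P Q := min_le_right _ _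
    rw [div_mul_eq_mul_div, div_le_iff₀ h2t]
    calc (t - 1) * dmin ≤ (t - 1) * dist P Q := by
          apply mul_le_mul_of_nonneg_left hle; linarith
      _ ≤ 2 * t * max (dist M P) (dist N Q) := this
      _ ≤ max (dist M P) (dist N Q) * (2 * t) := by ring_nf; exact le_refl _
  · -- PQ inserted before MN
    have := main P Q M N L1 L2 l1 l2 heq2 heq1 hfail2 hfail1 hgt
      (by rw [dist_comm]; exact lt_of_lt_of_le hMPlt (min_le_left _ _))
      (by rw [dist_comm]; exact lt_of_lt_of_le hNQlt (min_le_left _ _))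
    rw [dist_comm P M, dist_comm Q N] at this
    have hle : dmin ≤ dist M N := min_le_left _ _
    rw [div_mul_eq_mul_div, div_le_iff₀ h2t]
    calc (t - 1) * dmin ≤ (t - 1) * dist M N := by
          apply mul_le_mul_of_nonneg_left hle; linarith
      _ ≤ 2 * t * max (dist M P) (dist N Q) := this
      _ ≤ max (dist M P) (dist N Q) * (2 * t) := by ring_nf; exact le_refl _

end
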